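/- If G is a finite non-abelian POEC group, then the order of G is not square-free. -/

import Mathlib

def POEC (G : Type*) [Group G] : Prop :=
  ∀ x y : G, (orderOf x).Prime → (orderOf y).Prime → Commute x y

theorem stmt_6 {G : Type*} [Group G] [Finite G] (h : POEC G)
    (hna : ∃ a b : G, a * b ≠ b * a) :
    ¬ Squarefree (Nat.card G) := by
  intro hsf
  set n := Nat.card G with hn
  -- key: for every S ⊆ n.primeFactors, there is x of order ∏ S commuting with
  -- all prime-order elements
  have key : ∀ S : Finset ℕ, S ⊆ n.primeFactors →
      ∃ x : G, orderOf x = ∏ p ∈ S, p ∧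
        ∀ y : G, (orderOf y).Prime → Commute x y := by
    intro S
    induction S using Finset.induction_on with
    | empty => exact fun _ => ⟨1, by simp, fun y _ => Commute.one_left y⟩
    | insert _ _ hpS ih =>
      rename_i p S
      intro hsub
      obtain ⟨x, hx, hxc⟩ := ih (fun q hq => hsub (Finset.mem_insert_of_mem hq))
      have hp : p.Prime := Nat.prime_of_mem_primeFactors (hsub (Finset.mem_insert_self p S))
      have hpd : p ∣ n := Nat.dvd_of_mem_primeFactors (hsub (Finset.mem_insert_self p S))
      have : Fact p.Prime := ⟨hp⟩
      obtain ⟨y, hy⟩ := exists_prime_orderOf_dvd_card' (G := G) p hpd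
      have hcomm : Commute x y := hxc y (hy ▸ hp)
      have hcop : Nat.Coprime (orderOf x) (orderOf y) := by
        rw [hx, hy]
        apply Nat.Coprime.prod_left
        intro q hq
        have hq' : q.Prime := Nat.prime_of_mem_primeFactors
          (hsub (Finset.mem_insert_of_mem hq))
        exact (Nat.coprime_primes hq' hp).2 (fun hqp => hpS (hqp ▸ hq))
      refine ⟨x * y, ?_, fun z hz => (hxc z hz).mul_left (h y z (hy ▸ hp) hz)⟩
      rw [hcomm.orderOf_mul_eq_mul_orderOf_of_coprime hcop, hx, hy,
        Finset.prod_insert hpS, mul_comm]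
  obtain ⟨x, hx, -⟩ := key n.primeFactors le_rfl
  rw [Nat.prod_primeFactors_of_squarefree hsf] at hx
  have : IsCyclic G := isCyclic_of_orderOf_eq_card x hx
  obtain ⟨g, hg⟩ := this.exists_generator
  obtain ⟨a, b, hab⟩ := hna
  obtain ⟨i, rfl⟩ := hg a
  obtain ⟨j, rfl⟩ := hg b
  exact hab (by rw [← zpow_add, ← zpow_add, add_comm])
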